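/- For the operators H'_{2m+1} = (1/2) ∑_{k∈Z} (-1)^{k+1} φ_k φ_{-k-(2m+1)} built from neutral fermions φ_k with φ_m φ_n + φ_n φ_m = (-1)^m δ_{m+n,0}, the commutation relation [H'_{2m+1}, H'_{2n+1}] = ((2m+1)/2) δ_{m+n+1, 0} · c holds (equivalently, [H'_a, H'_b] = (a/2) δ_{a+b,0} c for odd a, b), where c acts as the identity on the Fock space. -/

import Mathlib

section Stmt6Aux

variable {M : Type*} [AddCommGroup M] [Module ℂ M]

private lemma stmt6_ne : ((-1:ℂ)) ≠ 0 := by norm_num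

private lemma stmt6_zc_even (s t : ℤ) (h : (s - t) % 2 = 0) : ((-1:ℂ))^s = (-1:ℂ)^t := by
  obtain ⟨u, hu⟩ : ∃ u, s = t + 2*u := ⟨(s-t)/2, by omega⟩
  subst hu
  rw [zpow_add₀ stmt6_ne, zpow_mul]
  norm_num

private lemma stmt6_zc_odd (s t : ℤ) (h : (s - t) % 2 ≠ 0) : ((-1:ℂ))^s = -((-1:ℂ)^t) := by
  obtain ⟨u, hu⟩ : ∃ u, s = t + 2*u + 1 := ⟨(s-t-1)/2, by omega⟩
  subst hu
  rw [zpow_add₀ stmt6_ne, zpow_add₀ stmt6_ne, zpow_mul]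
  norm_num

private lemma stmt6_comm4 (φ : ℤ → M →ₗ[ℂ] M)
    (hrel : ∀ (x y : ℤ) (w : M),
      φ x (φ y w) + φ y (φ x w) = ((-1 : ℂ) ^ x) • (if x + y = 0 then w else 0))
    (j j' k k' : ℤ) (v : M) :
    φ j (φ j' (φ k (φ k' v))) - φ k (φ k' (φ j (φ j' v)))
      = ((-1:ℂ)^j') • (if j' + k = 0 then φ j (φ k' v) else 0)
        - ((-1:ℂ)^j') • (if j' + k' = 0 then φ j (φ k v) else 0)
        + ((-1:ℂ)^j) • (if j + k = 0 then φ k' (φ j' v) else 0)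
        - ((-1:ℂ)^j) • (if j + k' = 0 then φ k (φ j' v) else 0) := by
  have h1 : φ j (φ j' (φ k (φ k' v))) + φ j (φ k (φ j' (φ k' v)))
      = ((-1:ℂ)^j') • (if j' + k = 0 then φ j (φ k' v) else 0) := by
    have := congrArg (φ j) (hrel j' k (φ k' v))
    simpa [map_add, map_smul, apply_ite (φ j)] using this
  have h2 : φ j (φ k (φ j' (φ k' v))) + φ j (φ k (φ k' (φ j' v)))
      = ((-1:ℂ)^j') • (if j' + k' = 0 then φ j (φ k v) else 0) := by
    have := congrArg (fun w => φ j (φ k w)) (hrel j' k' v)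
    simpa [map_add, map_smul, apply_ite (φ j), apply_ite (φ k)] using this
  have h3 := hrel j k (φ k' (φ j' v))
  have h4 : φ k (φ j (φ k' (φ j' v))) + φ k (φ k' (φ j (φ j' v)))
      = ((-1:ℂ)^j) • (if j + k' = 0 then φ k (φ j' v) else 0) := by
    have := congrArg (φ k) (hrel j k' (φ j' v))
    simpa [map_add, map_smul, apply_ite (φ k)] using this
  linear_combination (norm := module) h1 - h2 + h3 - h4

private lemma stmt6_shift (G : ℤ → M) (l u t : ℤ) :
    ∑ j ∈ Finset.Icc l u, G j = ∑ i ∈ Finset.Icc (l - t) (u - t), G (i + t) := by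
  have h : Finset.Icc l u
      = (Finset.Icc (l - t) (u - t)).map ⟨fun i => i + t, add_left_injective t⟩ := by
    ext x
    simp only [Finset.mem_map, Finset.mem_Icc, Function.Embedding.coeFn_mk]
    constructor
    · intro h; exact ⟨x - t, by omega, by omega⟩
    · rintro ⟨i, hi, rfl⟩; omega
  rw [h, Finset.sum_map]
  simp

private lemma stmt6_core (f : ℤ → M) (Q : ℤ) (h0 : ∀ j : ℤ, j < -Q ∨ Q < j → f j = 0)
    (s : Finset ℤ) (hs : Finset.Icc (-Q) Q ⊆ s) :
    ∑ j ∈ s, f j = ∑ j ∈ Finset.Icc (-Q) Q, f j := by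
  refine (Finset.sum_subset hs ?_).symm
  intro x _ hx
  simp only [Finset.mem_Icc, not_and_or, not_le] at hx
  exact h0 x (by omega)

private lemma stmt6_inter (a b c d : ℤ) :
    Finset.Icc a b ∩ Finset.Icc c d = Finset.Icc (max a c) (min b d) := by
  ext x; simp only [Finset.mem_inter, Finset.mem_Icc]; omega

private lemma stmt6_formula (f : ℤ → M) (v : M) (Q : ℤ) (hQ : 0 ≤ Q)
    (hup : ∀ j : ℤ, Q < j → f j = 0) (hlow : ∀ j : ℤ, j < -Q → f j = v)
    (l u : ℤ) (hl : l ≤ -Q) (hu : Q ≤ u) :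
    ∑ j ∈ Finset.Icc l u, f j
      = ((-Q - l : ℤ) : ℂ) • v + ∑ j ∈ Finset.Icc (-Q) Q, f j := by
  have hsplit : Finset.Icc l u = Finset.Icc l (-Q - 1) ∪ Finset.Icc (-Q) u := by
    ext x; simp only [Finset.mem_Icc, Finset.mem_union]; omega
  have hdisj : Disjoint (Finset.Icc l (-Q - 1)) (Finset.Icc (-Q) u) := by
    rw [Finset.disjoint_left]; intro x hx hx'
    simp only [Finset.mem_Icc] at hx hx'; omega
  rw [hsplit, Finset.sum_union hdisj]
  have e1 : ∑ j ∈ Finset.Icc l (-Q - 1), f j = ((-Q - l : ℤ) : ℂ) • v := by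
    rw [Finset.sum_congr rfl (fun j hj => hlow j (by simp only [Finset.mem_Icc] at hj; omega)),
      Finset.sum_const, Int.card_Icc, ← Nat.cast_smul_eq_nsmul ℂ]
    congr 1
    rw [show (-Q - 1 + 1 - l) = -Q - l from by ring]
    exact_mod_cast congrArg (fun x : ℤ => (x : ℂ)) (Int.toNat_of_nonneg (by omega))
  have e2 : ∑ j ∈ Finset.Icc (-Q) u, f j = ∑ j ∈ Finset.Icc (-Q) Q, f j := by
    refine (Finset.sum_subset (Finset.Icc_subset_Icc le_rfl hu) ?_).symm
    intro x hx hx'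
    simp only [Finset.mem_Icc] at hx hx'
    exact hup x (by omega)
  rw [e1, e2]

private lemma stmt6_main (φ : ℤ → M →ₗ[ℂ] M)
    (hrel : ∀ (x y : ℤ) (w : M),
      φ x (φ y w) + φ y (φ x w) = ((-1 : ℂ) ^ x) • (if x + y = 0 then w else 0))
    (a b : ℤ) (ha : a % 2 = 1) (hb : b % 2 = 1) (v : M)
    (Nv : ℤ) (hNv : ∀ k < Nv, φ k v = 0)
    (N : ℕ)
    (hbig : (Nv.natAbs : ℤ) + 2 * (((a+b).natAbs : ℤ)) + (a.natAbs : ℤ) + (b.natAbs : ℤ) + 1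
      ≤ (N : ℤ)) :
    ∑ j ∈ Finset.Icc (-(N:ℤ)) (N:ℤ), ∑ k ∈ Finset.Icc (-(N:ℤ)) (N:ℤ),
      ((((-1:ℂ))^(j+1) * ((-1:ℂ))^(k+1)) • φ j (φ (-j - a) (φ k (φ (-k - b) v)))
        - (((-1:ℂ))^(k+1) * ((-1:ℂ))^(j+1)) • φ k (φ (-k - b) (φ j (φ (-j - a) v))))
      = if a + b = 0 then ((2 * a : ℤ) : ℂ) • v else 0 := by
  set I : Finset ℤ := Finset.Icc (-(N:ℤ)) (N:ℤ) with hI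
  set c : ℤ := a + b with hc
  set Q : ℤ := (Nv.natAbs : ℤ) + (c.natAbs : ℤ) + 1 with hQ
  set f : ℤ → M := fun j => ((-1:ℂ))^j • φ j (φ (-j - c) v) with hf
  set g : ℤ → M := fun j => ((-1:ℂ))^j • φ (j - b) (φ (-j - a) v) with hg
  -- Step 1: pointwise pair identity
  have pair : ∀ j k : ℤ,
      ((((-1:ℂ))^(j+1) * ((-1:ℂ))^(k+1)) • φ j (φ (-j - a) (φ k (φ (-k - b) v)))
        - (((-1:ℂ))^(k+1) * ((-1:ℂ))^(j+1)) • φ k (φ (-k - b) (φ j (φ (-j - a) v))))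
      = (if k = j + a then f j else 0) + (if k = -j - c then f j else 0)
        + (if k = -j then g j else 0) + (if k = j - b then g j else 0) := by
    intro j k
    rw [mul_comm (((-1:ℂ))^(k+1)) (((-1:ℂ))^(j+1)), ← smul_sub,
      stmt6_comm4 φ hrel j (-j-a) k (-k-b) v]
    have e1 : (((-1:ℂ))^(j+1) * ((-1:ℂ))^(k+1)) •
        (((-1:ℂ)^(-j-a)) • (if -j-a + k = 0 then φ j (φ (-k-b) v) else 0))
        = (if k = j + a then f j else 0) := by
      by_cases h : k = j + a
      · subst h
        rw [if_pos rfl, if_pos (show -j - a + (j + a) = 0 from by omega), smul_smul,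
          show -(j+a) - b = -j - c from by omega]
        simp only [hf]
        rw [← zpow_add₀ stmt6_ne, ← zpow_add₀ stmt6_ne, stmt6_zc_even _ j (by omega)]
      · rw [if_neg (show ¬(-j - a + k = 0) from by omega), if_neg h, smul_zero, smul_zero]
    have e2 : (((-1:ℂ))^(j+1) * ((-1:ℂ))^(k+1)) •
        (((-1:ℂ)^(-j-a)) • (if -j-a + (-k-b) = 0 then φ j (φ k v) else 0))
        = -(if k = -j - c then f j else 0) := by
      by_cases h : k = -j - c
      · subst h
        rw [if_pos rfl, if_pos (show -j - a + (-(-j - c) - b) = 0 from by omega), smul_smul]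
        simp only [hf]
        rw [← zpow_add₀ stmt6_ne, ← zpow_add₀ stmt6_ne, stmt6_zc_odd _ j (by omega), neg_smul]
      · rw [if_neg (show ¬(-j - a + (-k - b) = 0) from by omega), if_neg h, smul_zero,
          smul_zero, neg_zero]
    have e3 : (((-1:ℂ))^(j+1) * ((-1:ℂ))^(k+1)) •
        (((-1:ℂ)^j) • (if j + k = 0 then φ (-k-b) (φ (-j-a) v) else 0))
        = (if k = -j then g j else 0) := by
      by_cases h : k = -j
      · subst h
        rw [if_pos rfl, if_pos (show j + -j = 0 from by omega), smul_smul,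
          show -(-j) - b = j - b from by omega]
        simp only [hg]
        rw [← zpow_add₀ stmt6_ne, ← zpow_add₀ stmt6_ne, stmt6_zc_even _ j (by omega)]
      · rw [if_neg (show ¬(j + k = 0) from by omega), if_neg h, smul_zero, smul_zero]
    have e4 : (((-1:ℂ))^(j+1) * ((-1:ℂ))^(k+1)) •
        (((-1:ℂ)^j) • (if j + (-k-b) = 0 then φ k (φ (-j-a) v) else 0))
        = -(if k = j - b then g j else 0) := by
      by_cases h : k = j - b
      · subst h
        rw [if_pos rfl, if_pos (show j + (-(j - b) - b) = 0 from by omega), smul_smul]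
        simp only [hg]
        rw [← zpow_add₀ stmt6_ne, ← zpow_add₀ stmt6_ne, stmt6_zc_odd _ j (by omega), neg_smul]
      · rw [if_neg (show ¬(j + (-k - b) = 0) from by omega), if_neg h, smul_zero,
          smul_zero, neg_zero]
    rw [smul_sub, smul_add, smul_sub, e1, e2, e3, e4]
    abel
  -- Step 2: collapse the inner sum
  have inner : ∀ j : ℤ,
      (∑ k ∈ I,
        ((((-1:ℂ))^(j+1) * ((-1:ℂ))^(k+1)) • φ j (φ (-j - a) (φ k (φ (-k - b) v)))
          - (((-1:ℂ))^(k+1) * ((-1:ℂ))^(j+1)) • φ k (φ (-k - b) (φ j (φ (-j - a) v)))))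
      = (if j + a ∈ I then f j else 0) + (if -j - c ∈ I then f j else 0)
        + (if -j ∈ I then g j else 0) + (if j - b ∈ I then g j else 0) := by
    intro j
    rw [Finset.sum_congr rfl (fun k _ => pair j k), Finset.sum_add_distrib,
      Finset.sum_add_distrib, Finset.sum_add_distrib,
      Finset.sum_ite_eq' I (j + a), Finset.sum_ite_eq' I (-j - c),
      Finset.sum_ite_eq' I (-j), Finset.sum_ite_eq' I (j - b)]
  rw [Finset.sum_congr rfl (fun j _ => inner j), Finset.sum_add_distrib,
    Finset.sum_add_distrib, Finset.sum_add_distrib]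
  -- Step 3: each of the four sums
  have hS1 : ∑ j ∈ I, (if j + a ∈ I then f j else 0)
      = ∑ j ∈ I ∩ Finset.Icc (-(N:ℤ) - a) ((N:ℤ) - a), f j := by
    have hcong : ∀ j ∈ I, (if j + a ∈ I then f j else 0)
        = (if j ∈ Finset.Icc (-(N:ℤ) - a) ((N:ℤ) - a) then f j else 0) := by
      intro j _
      refine if_congr ?_ rfl rfl
      simp only [hI, Finset.mem_Icc]; omega
    rw [Finset.sum_congr rfl hcong, Finset.sum_ite_mem]
  have hS2 : ∑ j ∈ I, (if -j - c ∈ I then f j else 0)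
      = ∑ j ∈ I ∩ Finset.Icc (-(N:ℤ) - c) ((N:ℤ) - c), f j := by
    have hcong : ∀ j ∈ I, (if -j - c ∈ I then f j else 0)
        = (if j ∈ Finset.Icc (-(N:ℤ) - c) ((N:ℤ) - c) then f j else 0) := by
      intro j _
      refine if_congr ?_ rfl rfl
      simp only [hI, Finset.mem_Icc]; omega
    rw [Finset.sum_congr rfl hcong, Finset.sum_ite_mem]
  have hgf : ∀ i : ℤ, g (i + b) = -(f i) := by
    intro i
    simp only [hg, hf]
    rw [show i + b - b = i from by ring, show -(i + b) - a = -i - c from by omega,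
      stmt6_zc_odd (i + b) i (by omega), neg_smul]
  have hS3 : ∑ j ∈ I, (if -j ∈ I then g j else 0)
      = -∑ i ∈ Finset.Icc (-(N:ℤ) - b) ((N:ℤ) - b), f i := by
    rw [hI, stmt6_shift _ _ _ b, ← Finset.sum_neg_distrib]
    refine Finset.sum_congr rfl fun i hi => ?_
    simp only [Finset.mem_Icc] at hi
    rw [if_pos (by simp only [Finset.mem_Icc]; omega), hgf i]
  have hS4 : ∑ j ∈ I, (if j - b ∈ I then g j else 0)
      = -∑ i ∈ Finset.Icc (-(N:ℤ) - b) ((N:ℤ) - b) ∩ I, f i := by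
    rw [hI, stmt6_shift _ _ _ b]
    have : ∀ i ∈ Finset.Icc (-(N:ℤ) - b) ((N:ℤ) - b),
        (if i + b - b ∈ Finset.Icc (-(N:ℤ)) (N:ℤ) then g (i + b) else 0)
        = -(if i ∈ Finset.Icc (-(N:ℤ)) (N:ℤ)  then f i else 0) := by
      intro i _
      by_cases h : i ∈ Finset.Icc (-(N:ℤ)) (N:ℤ)
      · rw [if_pos (by simp only [Finset.mem_Icc] at h ⊢; omega), if_pos h, hgf i]
      · rw [if_neg (by simp only [Finset.mem_Icc] at h ⊢; omega), if_neg h, neg_zero]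
    rw [Finset.sum_congr rfl this, Finset.sum_neg_distrib, Finset.sum_ite_mem]
  rw [hS1, hS2, hS3, hS4]
  -- Step 4: boundary analysis
  have hupf : ∀ j : ℤ, Q < j → f j = 0 := by
    intro j hj
    simp only [hf]
    rw [hNv (-j - c) (by omega), map_zero, smul_zero]
  by_cases hc0 : c = 0
  · -- central term
    have hlowv : ∀ j : ℤ, j < -Q → f j = v := by
      intro j hj
      have h1 : φ j v = 0 := hNv j (by omega)
      have h2 := hrel j (-j - c) v
      rw [h1, map_zero, add_zero, if_pos (show j + (-j - c) = 0 from by omega)] at h2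
      simp only [hf]
      rw [h2, smul_smul, ← mul_zpow]
      norm_num
    rw [if_pos hc0, hI, stmt6_inter, stmt6_inter, stmt6_inter,
      stmt6_formula f v Q (by omega) hupf hlowv (max (-(N:ℤ)) (-(N:ℤ) - a))
        (min ((N:ℤ)) ((N:ℤ) - a)) (by omega) (by omega),
      stmt6_formula f v Q (by omega) hupf hlowv (max (-(N:ℤ)) (-(N:ℤ) - c))
        (min ((N:ℤ)) ((N:ℤ) - c)) (by omega) (by omega),
      stmt6_formula f v Q (by omega) hupf hlowv (-(N:ℤ) - b)
        ((N:ℤ) - b) (by omega) (by omega),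
      stmt6_formula f v Q (by omega) hupf hlowv (max (-(N:ℤ) - b) (-(N:ℤ)))
        (min ((N:ℤ) - b) ((N:ℤ))) (by omega) (by omega)]
    rw [show ((2 * a : ℤ) : ℂ) =
      (((-Q - max (-(N:ℤ)) (-(N:ℤ) - a)) + (-Q - max (-(N:ℤ)) (-(N:ℤ) - c))
        - (-Q - (-(N:ℤ) - b)) - (-Q - max (-(N:ℤ) - b) (-(N:ℤ))) : ℤ) : ℂ) from by
        rw [show ((-Q - max (-(N:ℤ)) (-(N:ℤ) - a)) + (-Q - max (-(N:ℤ)) (-(N:ℤ) - c))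
          - (-Q - (-(N:ℤ) - b)) - (-Q - max (-(N:ℤ) - b) (-(N:ℤ))) : ℤ) = 2 * a from by omega]]
    push_cast
    module
  · -- zero case
    have hlowf : ∀ j : ℤ, j < -Q → f j = 0 := by
      intro j hj
      have h1 : φ j v = 0 := hNv j (by omega)
      have h2 := hrel j (-j - c) v
      rw [h1, map_zero, add_zero, if_neg (show ¬(j + (-j - c) = 0) from by omega),
        smul_zero] at h2
      simp only [hf]
      rw [h2, smul_zero]
    have hvan : ∀ j : ℤ, j < -Q ∨ Q < j → f j = 0 := fun j hj => hj.elim (hlowf j) (hupf j)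
    have k1 := stmt6_core f Q hvan (I ∩ Finset.Icc (-(N:ℤ) - a) ((N:ℤ) - a))
      (by
        rw [hI]
        exact Finset.subset_inter (Finset.Icc_subset_Icc (by omega) (by omega))
          (Finset.Icc_subset_Icc (by omega) (by omega)))
    have k2 := stmt6_core f Q hvan (I ∩ Finset.Icc (-(N:ℤ) - c) ((N:ℤ) - c))
      (by
        rw [hI]
        exact Finset.subset_inter (Finset.Icc_subset_Icc (by omega) (by omega))
          (Finset.Icc_subset_Icc (by omega) (by omega)))
    have k3 := stmt6_core f Q hvan (Finset.Icc (-(N:ℤ) - b) ((N:ℤ) - b))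
      (Finset.Icc_subset_Icc (by omega) (by omega))
    have k4 := stmt6_core f Q hvan (Finset.Icc (-(N:ℤ) - b) ((N:ℤ) - b) ∩ I)
      (by
        rw [hI]
        exact Finset.subset_inter (Finset.Icc_subset_Icc (by omega) (by omega))
          (Finset.Icc_subset_Icc (by omega) (by omega)))
    rw [k1, k2, k3, k4, if_neg hc0]
    abel

private lemma stmt6_expand (φ : ℤ → M →ₗ[ℂ] M) (I : Finset ℤ) (A B : ℤ) (v : M) :
    (1/2 : ℂ) • ∑ j ∈ I, ((-1:ℂ))^(j+1) •
        φ j (φ (-j - A) ((1/2 : ℂ) • ∑ k ∈ I, ((-1:ℂ))^(k+1) • φ k (φ (-k - B) v)))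
      = (1/4 : ℂ) • ∑ j ∈ I, ∑ k ∈ I,
          (((-1:ℂ))^(j+1) * ((-1:ℂ))^(k+1)) • φ j (φ (-j - A) (φ k (φ (-k - B) v))) := by
  simp only [map_smul, map_sum, Finset.smul_sum, smul_smul]
  refine Finset.sum_congr rfl fun j _ => Finset.sum_congr rfl fun k _ => ?_
  congr 1
  ring

private lemma stmt6_expand' (φ : ℤ → M →ₗ[ℂ] M) (I : Finset ℤ) (A B : ℤ) (v : M) :
    (1/2 : ℂ) • ∑ j ∈ I, ((-1:ℂ))^(j+1) •
        φ j (φ (-j - B) ((1/2 : ℂ) • ∑ k ∈ I, ((-1:ℂ))^(k+1) • φ k (φ (-k - A) v)))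
      = (1/4 : ℂ) • ∑ j ∈ I, ∑ k ∈ I,
          (((-1:ℂ))^(k+1) * ((-1:ℂ))^(j+1)) • φ k (φ (-k - B) (φ j (φ (-j - A) v))) := by
  rw [stmt6_expand φ I B A v]
  congr 1
  exact Finset.sum_comm

end Stmt6Aux

/-- For neutral fermions `φ_k` (with `φ_m φ_n + φ_n φ_m = (-1)^m δ_{m+n,0}`) acting on a
Fock-type space, and operators `H'_{2m+1}` given on each vector by the (eventually stable)
truncated sums `(1/2) ∑_k (-1)^{k+1} φ_k φ_{-k-(2m+1)}`, one has the Heisenberg commutation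
relation `[H'_{2m+1}, H'_{2n+1}] = ((2m+1)/2) δ_{m+n+1,0} · id`. -/
theorem stmt6 (M : Type*) [AddCommGroup M] [Module ℂ M]
    (φ : ℤ → M →ₗ[ℂ] M)
    (hrel : ∀ (m n : ℤ) (v : M),
      φ m (φ n v) + φ n (φ m v) = ((-1 : ℂ) ^ m) • (if m + n = 0 then v else 0))
    (hfock : ∀ v : M, ∃ N : ℤ, ∀ k < N, φ k v = 0)
    (H : ℤ → M →ₗ[ℂ] M)
    (hH : ∀ (m : ℤ) (v : M), ∃ N₀ : ℕ, ∀ N ≥ N₀,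
      H m v = (1/2 : ℂ) • ∑ k ∈ Finset.Icc (-(N : ℤ)) (N : ℤ),
        ((-1 : ℂ) ^ (k + 1)) • φ k (φ (-k - (2*m+1)) v)) :
    ∀ (m n : ℤ) (v : M),
      H m (H n v) - H n (H m v) =
        (((2*m+1 : ℤ) : ℂ)/2) • (if m + n + 1 = 0 then v else 0) := by
  intro m n v
  obtain ⟨Nv, hNv⟩ := hfock v
  obtain ⟨N₁, h1⟩ := hH n v
  obtain ⟨N₂, h2⟩ := hH m v
  obtain ⟨N₃, h3⟩ := hH m (H n v)
  obtain ⟨N₄, h4⟩ := hH n (H m v)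
  set N : ℕ := max N₁ (max N₂ (max N₃ (max N₄
    (Nv.natAbs + 8 * m.natAbs + 8 * n.natAbs + 20)))) with hN
  have e1 := h1 N (by omega)
  have e2 := h2 N (by omega)
  have e3 := h3 N (by omega)
  have e4 := h4 N (by omega)
  rw [e3, e4, e1, e2, stmt6_expand φ _ (2*m+1) (2*n+1) v, stmt6_expand' φ _ (2*m+1) (2*n+1) v,
    ← smul_sub]
  simp only [← Finset.sum_sub_distrib]
  rw [stmt6_main φ hrel (2*m+1) (2*n+1) (by omega) (by omega) v Nv hNv N (by omega)]
  by_cases hmn : m + n + 1 = 0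
  · rw [if_pos (show (2*m+1) + (2*n+1) = 0 from by omega), if_pos hmn, smul_smul]
    congr 1
    push_cast
    ring
  · rw [if_neg (show ¬((2*m+1) + (2*n+1) = 0) from by omega), if_neg hmn, smul_zero,
      smul_zero]
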